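/- (Condensation at pivot in first row) Let A be an n×n matrix, n > 2, and let l be an index with 1 ≤ l ≤ n. Define the (n-1)×(n-1) matrix B with entries b_{i,j} = det [[a_{1,l}, a_{1,j+1}],[a_{i+1,l}, a_{i+1,j+1}]] if l ≤ j, and b_{i,j} = det [[a_{1,j}, a_{1,l}],[a_{i+1,j}, a_{i+1,l}]] if j < l. Then (a_{1,l})^{n-2} · det A = det B. -/

import Mathlib

open Matrix Finset

private lemma card_val_lt (m k : ℕ) (h : k ≤ m) :
    (Finset.univ.filter (fun j : Fin m => (j : ℕ) < k)).card = k := by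
  have h1 := Finset.filter_map (s := (Finset.univ : Finset (Fin m)))
      (f := Fin.valEmbedding) (p := fun x => x < k)
  rw [Fin.map_valEmbedding_univ, Finset.Iio_filter_lt] at h1
  have h2 := congrArg Finset.card h1
  rw [Finset.card_map, Nat.card_Iio, min_eq_right h] at h2
  simpa using h2.symm

private lemma chio_aux {R : Type*} [CommRing R] (n : ℕ)
    (A : Matrix (Fin (n + 3)) (Fin (n + 3)) R) (l : Fin (n + 3)) :
    (A 0 l) ^ (n + 2) * A.det =
      A 0 l * Matrix.det (fun i j : Fin (n + 2) =>
        if l.val ≤ j.val then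
          A 0 l * A i.succ j.succ - A 0 j.succ * A i.succ l
        else
          A 0 j.castSucc * A i.succ l - A 0 l * A i.succ j.castSucc) := by
  set p := A 0 l with hp
  set C : Matrix (Fin (n + 3)) (Fin (n + 3)) R :=
    Matrix.of fun i j => if i = 0 then A i j else p * A i j - A i l * A 0 j with hCdef
  set D : Matrix (Fin (n + 3)) (Fin (n + 3)) R :=
    Matrix.of fun i j =>
      if i = j then (if i = 0 then 1 else p) else if j = 0 then -(A i l) else 0 with hDdef
  have hCD : C = D * A := by
    ext i j
    rcases eq_or_ne i 0 with rfl | hi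
    · simp only [hCdef, hDdef, Matrix.mul_apply, Matrix.of_apply, if_pos rfl]
      rw [Finset.sum_eq_single (0 : Fin (n + 3))]
      · simp
      · intro k _ hk
        simp [hk, Ne.symm hk]
      · simp
    · obtain ⟨i', rfl⟩ := Fin.exists_succ_eq.mpr hi
      simp only [hCdef, hDdef, Matrix.mul_apply, Matrix.of_apply, if_neg hi]
      rw [Fin.sum_univ_succ]
      simp [Fin.succ_ne_zero, Fin.succ_inj, ite_mul, Finset.sum_ite_eq]
      ring
  have hD : D.det = p ^ (n + 2) := by
    rw [Matrix.det_of_lowerTriangular D (fun i j hij => ?_)]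
    · rw [Fin.prod_univ_succ]
      simp [hDdef, Fin.succ_ne_zero, Finset.prod_const]
    · have hlt : i < j := hij
      have h1 : i ≠ j := ne_of_lt hlt
      have h2 : j ≠ 0 := Fin.pos_iff_ne_zero.mp ((Fin.zero_le i).trans_lt hlt)
      simp [hDdef, h1, h2]
  have hMcol : ∀ i : Fin (n + 3), i ≠ 0 → C i l = 0 := by
    intro i hi
    simp only [hCdef, Matrix.of_apply, if_neg hi, hp]
    ring
  have hdetC : C.det
      = (-1) ^ (l : ℕ) * p * Matrix.det (C.submatrix Fin.succ l.succAbove) := by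
    rw [Matrix.det_succ_column C l, Finset.sum_eq_single (0 : Fin (n + 3))]
    · simp [hCdef, hp, mul_assoc]
    · intro i _ hi
      rw [hMcol i hi]
      ring
    · simp
  set s : Fin (n + 2) → R := fun j => if (l : ℕ) ≤ (j : ℕ) then 1 else -1 with hs
  have hB : (fun i j : Fin (n + 2) =>
        if l.val ≤ j.val then
          p * A i.succ j.succ - A 0 j.succ * A i.succ l
        else
          A 0 j.castSucc * A i.succ l - p * A i.succ j.castSucc)
      = (C.submatrix Fin.succ l.succAbove) * Matrix.diagonal s := by
    ext i j
    rw [Matrix.mul_diagonal]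
    by_cases h : (l : ℕ) ≤ (j : ℕ)
    · have hsa : l.succAbove j = j.succ :=
        Fin.succAbove_of_le_castSucc _ _ (by simpa [Fin.le_def] using h)
      simp only [if_pos h, hs, Matrix.submatrix_apply, hsa, hCdef, Matrix.of_apply,
        if_neg (Fin.succ_ne_zero i), if_pos h]
      ring
    · have hsa : l.succAbove j = j.castSucc :=
        Fin.succAbove_of_castSucc_lt _ _ (by simpa [Fin.lt_def] using Nat.lt_of_not_le h)
      simp only [if_neg h, hs, Matrix.submatrix_apply, hsa, hCdef, Matrix.of_apply,
        if_neg (Fin.succ_ne_zero i)]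
      ring
  have hps : (∏ j, s j) = (-1 : R) ^ (l : ℕ) := by
    rw [hs]
    rw [Finset.prod_ite, Finset.prod_const_one, one_mul, Finset.prod_const]
    congr 1
    have he : (Finset.univ.filter fun j : Fin (n + 2) => ¬ (l : ℕ) ≤ (j : ℕ))
        = Finset.univ.filter fun j : Fin (n + 2) => (j : ℕ) < (l : ℕ) := by
      simp [Nat.not_le]
    rw [he, card_val_lt _ _ (by omega : (l : ℕ) ≤ n + 2)]
  calc p ^ (n + 2) * A.det = D.det * A.det := by rw [hD]
    _ = C.det := by rw [hCD, Matrix.det_mul]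
    _ = (-1) ^ (l : ℕ) * p * Matrix.det (C.submatrix Fin.succ l.succAbove) := hdetC
    _ = p * (Matrix.det (C.submatrix Fin.succ l.succAbove) * ∏ j, s j) := by
        rw [hps]; ring
    _ = p * Matrix.det ((C.submatrix Fin.succ l.succAbove) * Matrix.diagonal s) := by
        rw [Matrix.det_mul, Matrix.det_diagonal]
    _ = _ := by rw [← hB]

/-- Chiò condensation at a pivot in the first row (the `k = 1` case). -/
theorem chio_condensation_first_row_pivot
    {R : Type*} [CommRing R] (n : ℕ)
    (A : Matrix (Fin (n + 3)) (Fin (n + 3)) R) (l : Fin (n + 3)) :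
    (A 0 l) ^ (n + 1) * A.det =
      Matrix.det fun i j : Fin (n + 2) =>
        if l.val ≤ j.val then
          A 0 l * A i.succ j.succ - A 0 j.succ * A i.succ l
        else
          A 0 j.castSucc * A i.succ l - A 0 l * A i.succ j.castSucc := by
  classical
  set G : Matrix (Fin (n + 3)) (Fin (n + 3)) (MvPolynomial (Fin (n + 3) × Fin (n + 3)) ℤ) :=
    Matrix.of fun i j => MvPolynomial.X (i, j) with hG
  have key := chio_aux n G l
  have hX : G 0 l ≠ 0 := MvPolynomial.X_ne_zero _
  rw [pow_succ, mul_comm ((G 0 l) ^ (n + 1)) (G 0 l), mul_assoc] at key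
  have key2 := mul_left_cancel₀ hX key
  set φ : MvPolynomial (Fin (n + 3) × Fin (n + 3)) ℤ →+* R :=
    (MvPolynomial.aeval (R := ℤ) fun q : Fin (n + 3) × Fin (n + 3) => A q.1 q.2).toRingHom
    with hφ
  have hmap := congrArg φ key2
  have hGA : G.map φ = A := by
    ext i j
    simp [hG, hφ]
  rw [_root_.map_mul, map_pow, RingHom.map_det] at hmap
  erw [RingHom.map_det] at hmap
  rw [RingHom.mapMatrix_apply] at hmap
  erw [RingHom.mapMatrix_apply] at hmap
  rw [hGA] at hmap
  convert hmap using 2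
  · simp [hG, hφ]
  · congr 1
    funext i j
    erw [Matrix.map_apply]
    simp only [Matrix.map_apply, Matrix.of_apply, apply_ite φ, map_sub, _root_.map_mul]
    simp [hG, hφ]
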